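/- arXiv:1811.10701 — 6 statements merged into one kernel-verified Lean document; each statement's English description precedes it below -/
import Mathlib

section
/- Let A be a commutative unital complex Banach algebra, let d ≥ 1 and p ≥ 1 be integers, let e₁, …, e_d ∈ A, and let real coefficients C_α be given for every multi-index α ∈ ℕ^d with |α| = p. Suppose Σ_{|α|=p} C_α · e₁^{α₁} ⋯ e_d^{α_d} = 0 in A. Let (c_r)_{r≥0} be complex numbers with Σ_{r=0}^∞ |c_r| R^r < ∞ for every R > 0 (i.e. Φ(z) = Σ_r c_r z^r is entire). Then the function u : ℝ^d → A defined by u(x₁,…,x_d) = Σ_{r=0}^∞ c_r (x₁e₁ + ⋯ + x_d e_d)^r satisfies the homogeneous equation Σ_{|α|=p} C_α · ∂^{p} u / (∂x₁^{α₁} ⋯ ∂x_d^{α_d}) = 0 at every point of ℝ^d. -/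
open scoped BigOperators

/-- The partial derivative of an `A`-valued function on `ℝ^d` in the `j`-th coordinate
direction. -/
noncomputable def partialDeriv' {A : Type*} [NormedAddCommGroup A] [NormedSpace ℝ A]
    {d : ℕ} (j : Fin d) (u : (Fin d → ℝ) → A) : (Fin d → ℝ) → A :=
  fun x => fderiv ℝ u x (Pi.single j 1)

/-- The mixed partial derivative `∂^{|α|} u / (∂x₁^{α₁} ⋯ ∂x_d^{α_d})` associated to the
multi-index `α`. -/
noncomputable def mixedPartialDeriv {A : Type*} [NormedAddCommGroup A] [NormedSpace ℝ A]
    {d : ℕ} (α : Fin d → ℕ) (u : (Fin d → ℝ) → A) : (Fin d → ℝ) → A :=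
  (List.finRange d).foldr (fun j v => (partialDeriv' j)^[α j] v) u

set_option linter.unusedSectionVars false
set_option maxHeartbeats 1000000

section Aux

variable {A : Type*} [NormedCommRing A] [NormedAlgebra ℂ A] [CompleteSpace A]
variable {d : ℕ} (e : Fin d → A)

noncomputable def Tlin : (Fin d → ℝ) →L[ℝ] A :=
  ∑ j, (ContinuousLinearMap.proj j).smulRight (e j)

lemma Tlin_apply (y : Fin d → ℝ) : Tlin e y = ∑ j, y j • e j := by
  simp [Tlin]

lemma Tlin_single (j : Fin d) : Tlin e (Pi.single j 1) = e j := by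
  rw [Tlin_apply, Finset.sum_eq_single j]
  · simp
  · intro b _ hb; simp [Pi.single_eq_of_ne hb]
  · simp

/-- derivative of `y ↦ (T y)^r`. -/
lemma hasFDerivAt_Tpow (r : ℕ) (x : Fin d → ℝ) :
    HasFDerivAt (fun y => Tlin e y ^ r)
      ((ContinuousLinearMap.mul ℝ A (r • Tlin e x ^ (r - 1))).comp (Tlin e)) x := by
  induction r with
  | zero =>
    simpa using hasFDerivAt_const (1 : A) x
  | succ r ih =>
    have h := ih.mul' (Tlin e).hasFDerivAt
    have heq : (Tlin e x ^ r) • (Tlin e) +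
        (((ContinuousLinearMap.mul ℝ A (r • Tlin e x ^ (r - 1))).comp (Tlin e)).smulRight
          (Tlin e x))
        = (ContinuousLinearMap.mul ℝ A ((r + 1) • Tlin e x ^ (r + 1 - 1))).comp (Tlin e) := by
      ext h
      simp only [ContinuousLinearMap.add_apply, ContinuousLinearMap.smul_apply,
        ContinuousLinearMap.comp_apply, ContinuousLinearMap.mul_apply',
        ContinuousLinearMap.smulRight_apply, smul_eq_mul, Nat.add_sub_cancel]
      cases r with
      | zero => simp [mul_comm]
      | succ s =>
        simp only [Nat.add_sub_cancel, succ_nsmul, add_mul, one_mul, smul_mul_assoc]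
        ring_nf
    rw [← heq]
    have hf : (fun y => Tlin e y ^ (r + 1)) = (fun y => Tlin e y ^ r) * ⇑(Tlin e) := by
      funext y; exact pow_succ _ _
    rw [hf]
    refine h.congr_fderiv ?_
    ext v
    simp [ContinuousLinearMap.smulRight_apply, smul_eq_mul]
    ring

def Growth (c : ℕ → ℂ) : Prop := ∀ R : ℝ, 0 < R → Summable fun r : ℕ => ‖c r‖ * R ^ r

noncomputable def shiftc (c : ℕ → ℂ) : ℕ → ℂ := fun r => ((r : ℂ) + 1) * c (r + 1)

lemma Growth.shift {c : ℕ → ℂ} (hc : Growth c) : Growth (shiftc c) := by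
  intro R hR
  have h2R := hc (2 * R) (by linarith)
  have h2R' : Summable fun r : ℕ => ‖c (r + 1)‖ * (2 * R) ^ (r + 1) :=
    h2R.comp_injective (add_left_injective 1)
  apply Summable.of_nonneg_of_le (fun r => by positivity)
    (fun r => ?_) (h2R'.mul_left (1 / R))
  have h1 : ‖shiftc c r‖ = ((r : ℝ) + 1) * ‖c (r + 1)‖ := by
    rw [_root_.shiftc, norm_mul]
    congr 1
    rw [show ((r : ℂ) + 1) = ((r + 1 : ℕ) : ℂ) by push_cast; ring,
      RCLike.norm_natCast]
    push_cast
    ring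
  rw [h1]
  have h2 : ((r : ℝ) + 1) ≤ 2 ^ (r + 1) := by
    calc ((r : ℝ) + 1) = ((r + 1 : ℕ) : ℝ) := by push_cast; ring
    _ ≤ 2 ^ (r + 1) := by exact_mod_cast (Nat.lt_two_pow_self (n := r + 1)).le
  calc ((r : ℝ) + 1) * ‖c (r + 1)‖ * R ^ r
      = (1 / R) * (((r : ℝ) + 1) * (‖c (r + 1)‖ * R ^ (r + 1))) := by
        rw [pow_succ]
        field_simp
    _ ≤ (1 / R) * (2 ^ (r + 1) * (‖c (r + 1)‖ * R ^ (r + 1))) := by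
        apply mul_le_mul_of_nonneg_left _ (by positivity)
        apply mul_le_mul_of_nonneg_right h2 (by positivity)
    _ = 1 / R * (‖c (r + 1)‖ * (2 * R) ^ (r + 1)) := by ring

lemma Growth.iter {c : ℕ → ℂ} (hc : Growth c) (k : ℕ) : Growth (shiftc^[k] c) := by
  induction k with
  | zero => exact hc
  | succ k ih => rw [Function.iterate_succ_apply']; exact ih.shift

lemma norm_pow_le'' (a : A) (r : ℕ) :
    ‖a ^ r‖ ≤ (‖(1 : A)‖ + 1) * (max 1 ‖a‖) ^ r := by
  cases r with
  | zero => simpa using by linarith [norm_nonneg (1 : A)]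
  | succ s =>
    calc ‖a ^ (s + 1)‖ ≤ ‖a‖ ^ (s + 1) := norm_pow_le' a s.succ_pos
    _ ≤ (max 1 ‖a‖) ^ (s + 1) := pow_le_pow_left₀ (norm_nonneg a) (le_max_right _ _) _
    _ ≤ (‖(1 : A)‖ + 1) * (max 1 ‖a‖) ^ (s + 1) := by
        nlinarith [pow_nonneg (le_trans zero_le_one (le_max_left 1 ‖a‖)) (s + 1),
          norm_nonneg (1 : A)]

lemma Growth.summable_pow {c : ℕ → ℂ} (hc : Growth c) (a : A) :
    Summable fun r : ℕ => c r • a ^ r := by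
  apply Summable.of_norm
  apply Summable.of_nonneg_of_le (fun r => norm_nonneg _) (fun r => ?_)
    (((hc (max 1 ‖a‖) (lt_of_lt_of_le one_pos (le_max_left _ _))).mul_left (‖(1 : A)‖ + 1)))
  rw [norm_smul]
  calc ‖c r‖ * ‖a ^ r‖ ≤ ‖c r‖ * ((‖(1 : A)‖ + 1) * (max 1 ‖a‖) ^ r) :=
        mul_le_mul_of_nonneg_left (norm_pow_le'' a r) (norm_nonneg _)
    _ = (‖(1 : A)‖ + 1) * (‖c r‖ * (max 1 ‖a‖) ^ r) := by ring

lemma hasFDerivAt_F {c : ℕ → ℂ} (hc : Growth c) (x : Fin d → ℝ) :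
    HasFDerivAt (fun y => ∑' r : ℕ, c r • Tlin e y ^ r)
      ((ContinuousLinearMap.mul ℝ A (∑' r : ℕ, shiftc c r • Tlin e x ^ r)).comp (Tlin e)) x := by
  classical
  set T := Tlin e with hT
  set R : ℝ := ‖x‖ + 1 with hR
  have hRpos : 0 < R := by positivity
  set M : ℝ := max 1 (‖T‖ * R) with hM
  have hM1 : (1 : ℝ) ≤ M := le_max_left _ _
  have hMpos : 0 < M := lt_of_lt_of_le one_pos hM1
  set B : ℝ := ‖(1 : A)‖ + 1 with hB
  have hBpos : 0 < B := by positivity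
  set f : ℕ → (Fin d → ℝ) → A := fun n y => c n • T y ^ n with hf
  set f' : ℕ → (Fin d → ℝ) → (Fin d → ℝ) →L[ℝ] A := fun n y =>
    c n • ((ContinuousLinearMap.mul ℝ A (n • T y ^ (n - 1))).comp T) with hf'
  set u : ℕ → ℝ := fun n => ‖T‖ * B * (‖c n‖ * (2 * M) ^ n) with hu
  have hu_sum : Summable u := (hc (2 * M) (by linarith)).mul_left _
  have hderiv : ∀ n y, HasFDerivAt (f n) (f' n y) y := fun n y =>
    (hasFDerivAt_Tpow e n y).const_smul (c n)
  have hbound : ∀ n (y : Fin d → ℝ), y ∈ Metric.ball (0 : Fin d → ℝ) R → ‖f' n y‖ ≤ u n := by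
    intro n y hy
    have hy' : ‖y‖ ≤ R := by
      have := Metric.mem_ball.mp hy
      rw [dist_zero_right] at this
      linarith
    have hTy : ‖T y‖ ≤ ‖T‖ * R :=
      le_trans (T.le_opNorm y) (mul_le_mul_of_nonneg_left hy' (norm_nonneg _))
    have hmaxTy : max 1 ‖T y‖ ≤ M := max_le hM1 (le_trans hTy (le_max_right _ _))
    have step1 : ‖f' n y‖ ≤ ‖c n‖ * (((n : ℝ) * (B * M ^ (n - 1))) * ‖T‖) := by
      show ‖c n • ((ContinuousLinearMap.mul ℝ A (n • T y ^ (n - 1))).comp T)‖ ≤ _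
      rw [norm_smul (c n) (((ContinuousLinearMap.mul ℝ A (n • T y ^ (n - 1))).comp T))]
      apply mul_le_mul_of_nonneg_left _ (norm_nonneg _)
      calc ‖((ContinuousLinearMap.mul ℝ A (n • T y ^ (n - 1))).comp T)‖
          ≤ ‖ContinuousLinearMap.mul ℝ A (n • T y ^ (n - 1))‖ * ‖T‖ :=
            ContinuousLinearMap.opNorm_comp_le _ _
        _ ≤ ‖n • T y ^ (n - 1)‖ * ‖T‖ := by
            apply mul_le_mul_of_nonneg_right (ContinuousLinearMap.opNorm_mul_apply_le ℝ A _)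
              (norm_nonneg _)
        _ ≤ ((n : ℝ) * ‖T y ^ (n - 1)‖) * ‖T‖ := by
            apply mul_le_mul_of_nonneg_right (norm_nsmul_le (n := n)) (norm_nonneg _)
        _ ≤ ((n : ℝ) * (B * (max 1 ‖T y‖) ^ (n - 1))) * ‖T‖ := by
            have := norm_pow_le'' (T y) (n - 1)
            apply mul_le_mul_of_nonneg_right _ (norm_nonneg _)
            exact mul_le_mul_of_nonneg_left this (Nat.cast_nonneg n)
        _ ≤ ((n : ℝ) * (B * M ^ (n - 1))) * ‖T‖ := by
            gcongr
    have step2 : (n : ℝ) * M ^ (n - 1) ≤ (2 * M) ^ n := by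
      calc (n : ℝ) * M ^ (n - 1) ≤ 2 ^ n * M ^ n := by
            apply mul_le_mul
            · exact_mod_cast (Nat.lt_two_pow_self (n := n)).le
            · exact pow_le_pow_right₀ hM1 (Nat.sub_le n 1)
            · positivity
            · positivity
        _ = (2 * M) ^ n := (mul_pow 2 M n).symm
    calc ‖f' n y‖ ≤ ‖c n‖ * (((n : ℝ) * (B * M ^ (n - 1))) * ‖T‖) := step1
      _ = ‖T‖ * B * (‖c n‖ * ((n : ℝ) * M ^ (n - 1))) := by ring
      _ ≤ ‖T‖ * B * (‖c n‖ * (2 * M) ^ n) := by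
          apply mul_le_mul_of_nonneg_left _ (by positivity)
          exact mul_le_mul_of_nonneg_left step2 (norm_nonneg _)
  have hx_mem : x ∈ Metric.ball (0 : Fin d → ℝ) R := by
    simp only [Metric.mem_ball, dist_zero_right]
    rw [hR]
    linarith
  have hf0 : Summable fun n => f n x := hc.summable_pow (T x)
  have main := hasFDerivAt_tsum_of_isPreconnected hu_sum Metric.isOpen_ball
    (convex_ball (0 : Fin d → ℝ) R).isPreconnected
    (fun n y _ => hderiv n y) hbound hx_mem hf0 hx_mem
  refine main.congr_fderiv (Eq.symm ?_)
  -- identify ∑' n, f' n x with the mul-comp form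
  have hsum_f' : Summable fun n => f' n x :=
    Summable.of_norm (hu_sum.of_nonneg_of_le (fun n => norm_nonneg _)
      (fun n => hbound n x hx_mem))
  symm
  refine ContinuousLinearMap.ext fun h => ?_
  have expand : (∑' n, f' n x) h = ∑' n, (f' n x) h :=
    ContinuousLinearMap.map_tsum (ContinuousLinearMap.apply ℝ A h) hsum_f'
  rw [expand]
  simp only [ContinuousLinearMap.apply_apply, hf', ContinuousLinearMap.smul_apply,
    ContinuousLinearMap.comp_apply, ContinuousLinearMap.mul_apply']
  have happlied : Summable fun n => c n • ((n • T x ^ (n - 1)) * T h) := by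
    have := hsum_f'.map (ContinuousLinearMap.apply ℝ A h) (ContinuousLinearMap.apply ℝ A h).continuous
    simpa [hf', Function.comp_def] using this
  rw [Summable.tsum_eq_zero_add happlied]
  simp only [Nat.cast_zero, zero_smul, zero_mul, smul_zero, zero_add, Nat.add_sub_cancel]
  have hvsum : Summable fun r : ℕ => shiftc c r • T x ^ r := hc.shift.summable_pow (T x)
  rw [← hvsum.tsum_mul_right (T h)]
  apply tsum_congr
  intro n
  rw [smul_mul_assoc, smul_mul_assoc, _root_.shiftc,
    ← Nat.cast_smul_eq_nsmul ℂ (n + 1) (T x ^ n * T h), smul_smul, mul_comm]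
  norm_cast

noncomputable def Fser (c : ℕ → ℂ) : (Fin d → ℝ) → A :=
  fun x => ∑' r : ℕ, c r • Tlin e x ^ r

lemma partialDeriv'_mul_F {c : ℕ → ℂ} (hc : Growth c) (a : A) (j : Fin d) :
    partialDeriv' j (fun x => a * Fser e c x) = fun x => (a * e j) * Fser e (shiftc c) x := by
  funext x
  have hF := hasFDerivAt_F e hc x
  have hmul : HasFDerivAt (fun y => a * Fser e c y)
      ((ContinuousLinearMap.mul ℝ A a).comp
        ((ContinuousLinearMap.mul ℝ A (Fser e (shiftc c) x)).comp (Tlin e))) x :=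
    ((ContinuousLinearMap.mul ℝ A a).hasFDerivAt).comp x hF
  rw [partialDeriv', hmul.fderiv]
  simp only [ContinuousLinearMap.comp_apply, ContinuousLinearMap.mul_apply', Tlin_single]
  ring

lemma iterate_partial (j : Fin d) (k : ℕ) : ∀ (c : ℕ → ℂ), Growth c → ∀ a : A,
    (partialDeriv' j)^[k] (fun x => a * Fser e c x)
      = fun x => (a * e j ^ k) * Fser e (shiftc^[k] c) x := by
  induction k with
  | zero => intro c hc a; simp
  | succ k ih =>
    intro c hc a
    rw [Function.iterate_succ_apply, partialDeriv'_mul_F e hc a j,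
      ih (shiftc c) hc.shift (a * e j)]
    funext x
    rw [← Function.iterate_succ_apply]
    rw [show k + 1 = k.succ from rfl, pow_succ]
    ring

lemma foldr_partial (α : Fin d → ℕ) : ∀ (l : List (Fin d)) (c : ℕ → ℂ), Growth c → ∀ a : A,
    l.foldr (fun j v => (partialDeriv' j)^[α j] v) (fun x => a * Fser e c x)
      = fun x => (a * (l.map (fun j => e j ^ α j)).prod) * Fser e (shiftc^[(l.map α).sum] c) x := by
  intro l
  induction l with
  | nil => intro c hc a; simp
  | cons j l ih =>
    intro c hc a
    rw [List.foldr_cons, ih c hc a, iterate_partial e j (α j) _ (hc.iter _) _]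
    funext x
    rw [List.map_cons, List.map_cons, List.sum_cons, List.prod_cons,
      Function.iterate_add_apply]
    ring

lemma mixedPartial_F (α : Fin d → ℕ) {c : ℕ → ℂ} (hc : Growth c) :
    mixedPartialDeriv α (Fser e c)
      = fun x => (∏ j, e j ^ α j) * Fser e (shiftc^[∑ j, α j] c) x := by
  have h1 : Fser e c = fun x => (1 : A) * Fser e c x := by funext x; rw [one_mul]
  rw [mixedPartialDeriv, h1, foldr_partial e α (List.finRange d) c hc 1]
  funext x
  rw [one_mul, Fin.prod_univ_def, Fin.sum_univ_def]


end Aux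

/-- If the vectors `e₁, …, e_d` of a commutative unital complex Banach algebra `A` satisfy the
homogeneous characteristic equation `Σ_{|α|=p} C_α e₁^{α₁} ⋯ e_d^{α_d} = 0`, and
`Φ(z) = Σ_r c_r z^r` is an entire function, then `u(x) = Σ_r c_r (x₁e₁ + ⋯ + x_d e_d)^r`
satisfies `Σ_{|α|=p} C_α ∂^{p} u / (∂x₁^{α₁} ⋯ ∂x_d^{α_d}) = 0` everywhere on `ℝ^d`. -/
theorem analytic_solves_homogeneous_pde_of_char_eq
    {A : Type*} [NormedCommRing A] [NormedAlgebra ℂ A] [CompleteSpace A]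
    (d p : ℕ) (hd : 1 ≤ d) (hp : 1 ≤ p) (e : Fin d → A) (C : (Fin d → ℕ) → ℝ)
    (c : ℕ → ℂ) (hc : ∀ R : ℝ, 0 < R → Summable fun r : ℕ => ‖c r‖ * R ^ r)
    (hchar :
      ∑ α ∈ Finset.univ.filter (fun α : Fin d → Fin (p + 1) => ∑ j, (α j : ℕ) = p),
        (C (fun j => (α j : ℕ)) : ℂ) • ∏ j, e j ^ (α j : ℕ) = 0) :
    ∀ x : Fin d → ℝ,
      ∑ α ∈ Finset.univ.filter (fun α : Fin d → Fin (p + 1) => ∑ j, (α j : ℕ) = p),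
        (C (fun j => (α j : ℕ)) : ℂ) •
          mixedPartialDeriv (fun j => (α j : ℕ))
            (fun y : Fin d → ℝ => ∑' r : ℕ, c r • (∑ j, y j • e j) ^ r) x = 0 := by
  intro x
  have hG : Growth c := hc
  have hu : (fun y : Fin d → ℝ => ∑' r : ℕ, c r • (∑ j, y j • e j) ^ r) = Fser e c := by
    funext y
    simp only [Fser, Tlin_apply]
  rw [hu]
  have hstep : ∀ α ∈ Finset.univ.filter
      (fun α : Fin d → Fin (p + 1) => ∑ j, (α j : ℕ) = p),
      (C (fun j => (α j : ℕ)) : ℂ) •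
          mixedPartialDeriv (fun j => (α j : ℕ)) (Fser e c) x
        = ((C (fun j => (α j : ℕ)) : ℂ) • ∏ j, e j ^ (α j : ℕ)) *
            Fser e (shiftc^[p] c) x := by
    intro α hα
    have hpα : (∑ j, ((α j : ℕ))) = p := (Finset.mem_filter.mp hα).2
    rw [congrFun (mixedPartial_F e (fun j => (α j : ℕ)) hG) x, hpα, smul_mul_assoc]
  rw [Finset.sum_congr rfl hstep, ← Finset.sum_mul, hchar, zero_mul]
end

section
/- Let k, m, g, k₁, m₁, g₁, k₂, m₂, g₂ ∈ ℂ satisfy k² + m² + g² = 0, k·k₁ + m·m₁ + g·g₁ = 0, and k₁² + m₁² + g₁² + 2(k·k₂ + m·m₂ + g·g₂) = 0, and let F : ℂ → ℂ be complex-differentiable on all of ℂ with derivative F'. Then the function u : ℝ³ → ℂ defined by u(x,y,z) = (k₂x + m₂y + g₂z) · F(ξ) + (1/2)(k₁x + m₁y + g₁z)² · F'(ξ), where ξ = kx + my + gz, satisfies the three-dimensional Laplace equation ∂²u/∂x² + ∂²u/∂y² + ∂²u/∂z² = 0 at every point of ℝ³. -/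
private lemma derivDiff (F : ℂ → ℂ) (hF : Differentiable ℂ F) : Differentiable ℂ (deriv F) :=
  ((contDiff_infty_iff_deriv.mp hF.contDiff).2).differentiable (by simp)

private lemma comp_hasDerivAt (F : ℂ → ℂ) (hF : Differentiable ℂ F) (c C w : ℂ) :
    HasDerivAt (fun z : ℂ => F (c * z + C)) (deriv F (c * w + C) * c) w := by
  have hc : HasDerivAt (fun z : ℂ => c * z + C) c w := by
    simpa using ((hasDerivAt_id w).const_mul c).add_const C
  exact ((hF.differentiableAt).hasDerivAt).comp w hc

private lemma key (F : ℂ → ℂ) (hF : Differentiable ℂ F) (a A b B c C : ℂ) (x : ℝ) (ξ : ℂ)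
    (hξ : c * x + C = ξ) :
    iteratedDeriv 2
      (fun s : ℝ => (a * s + A) * F (c * s + C)
        + (1 / 2) * (b * s + B) ^ 2 * deriv F (c * s + C)) x
    = (2 * a * c + b ^ 2) * deriv F ξ
      + ((a * x + A) * c ^ 2 + 2 * (b * x + B) * b * c) * deriv (deriv F) ξ
      + (1 / 2) * (b * x + B) ^ 2 * c ^ 2 * deriv (deriv (deriv F)) ξ := by
  have hG : Differentiable ℂ (deriv F) := derivDiff F hF
  have hH : Differentiable ℂ (deriv (deriv F)) := derivDiff _ hG
  set G := deriv F with hGdef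
  set H := deriv G with hHdef
  -- derivative of the first complex layer
  have hU : ∀ w : ℂ, HasDerivAt
      (fun z : ℂ => (a * z + A) * F (c * z + C) + (1 / 2) * (b * z + B) ^ 2 * G (c * z + C))
      (a * F (c * w + C) + ((a * w + A) * c + (b * w + B) * b) * G (c * w + C)
        + (1 / 2) * (b * w + B) ^ 2 * c * H (c * w + C)) w := by
    intro w
    have h1 : HasDerivAt (fun z : ℂ => a * z + A) a w := by
      simpa using ((hasDerivAt_id w).const_mul a).add_const A
    have h2 := comp_hasDerivAt F hF c C w
    have h3 : HasDerivAt (fun z : ℂ => b * z + B) b w := by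
      simpa using ((hasDerivAt_id w).const_mul b).add_const B
    have h4 := comp_hasDerivAt G hG c C w
    have h5 : HasDerivAt (fun z : ℂ => (1 / 2) * (b * z + B) ^ 2) ((b * w + B) * b) w := by
      have := ((h3.pow 2).const_mul (1 / 2 : ℂ))
      refine this.congr_deriv ?_
      push_cast
      ring
    have := (h1.mul h2).add (h5.mul h4)
    refine this.congr_deriv ?_
    rw [← hGdef, ← hHdef]
    ring
  have hV : ∀ w : ℂ, HasDerivAt
      (fun z : ℂ => a * F (c * z + C) + ((a * z + A) * c + (b * z + B) * b) * G (c * z + C)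
        + (1 / 2) * (b * z + B) ^ 2 * c * H (c * z + C))
      ((2 * a * c + b ^ 2) * G (c * w + C)
        + ((a * w + A) * c ^ 2 + 2 * (b * w + B) * b * c) * H (c * w + C)
        + (1 / 2) * (b * w + B) ^ 2 * c ^ 2 * deriv H (c * w + C)) w := by
    intro w
    have h2 := comp_hasDerivAt F hF c C w
    have h4 := comp_hasDerivAt G hG c C w
    have h6 := comp_hasDerivAt H hH c C w
    have hlin : HasDerivAt (fun z : ℂ => (a * z + A) * c + (b * z + B) * b)
        (a * c + b * b) w := by
      have h1 : HasDerivAt (fun z : ℂ => a * z + A) a w := by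
        simpa using ((hasDerivAt_id w).const_mul a).add_const A
      have h3 : HasDerivAt (fun z : ℂ => b * z + B) b w := by
        simpa using ((hasDerivAt_id w).const_mul b).add_const B
      exact (h1.mul_const c).add (h3.mul_const b)
    have hquad : HasDerivAt (fun z : ℂ => (1 / 2) * (b * z + B) ^ 2 * c)
        ((b * w + B) * b * c) w := by
      have h3 : HasDerivAt (fun z : ℂ => b * z + B) b w := by
        simpa using ((hasDerivAt_id w).const_mul b).add_const B
      have := ((h3.pow 2).const_mul (1 / 2 : ℂ)).mul_const c
      refine this.congr_deriv ?_
      push_cast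
      ring
    have := ((h2.const_mul a).add (hlin.mul h4)).add (hquad.mul h6)
    refine this.congr_deriv ?_
    rw [← hGdef]
    ring
  -- pass to real derivatives
  have hd1 : (deriv fun s : ℝ => (a * s + A) * F (c * s + C)
      + (1 / 2) * (b * s + B) ^ 2 * G (c * s + C))
      = fun s : ℝ => a * F (c * s + C) + ((a * s + A) * c + (b * s + B) * b) * G (c * s + C)
        + (1 / 2) * (b * s + B) ^ 2 * c * H (c * s + C) := by
    funext s
    exact ((hU s).comp_ofReal).deriv
  rw [iteratedDeriv_succ, iteratedDeriv_one, hd1]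
  have := ((hV x).comp_ofReal).deriv
  rw [this, hξ]

/-- If `k² + m² + g² = 0`, `k·k₁ + m·m₁ + g·g₁ = 0` and
`k₁² + m₁² + g₁² + 2(k·k₂ + m·m₂ + g·g₂) = 0`, and `F` is entire, then
`u(x,y,z) = (k₂x + m₂y + g₂z)·F(ξ) + (1/2)(k₁x + m₁y + g₁z)²·F'(ξ)` with `ξ = kx + my + gz`
satisfies the three-dimensional Laplace equation. -/
theorem laplace_solution_deg_two (k m g k₁ m₁ g₁ k₂ m₂ g₂ : ℂ)
    (hchar : k ^ 2 + m ^ 2 + g ^ 2 = 0)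
    (hchar1 : k * k₁ + m * m₁ + g * g₁ = 0)
    (hchar2 : k₁ ^ 2 + m₁ ^ 2 + g₁ ^ 2 + 2 * (k * k₂ + m * m₂ + g * g₂) = 0)
    (F : ℂ → ℂ) (hF : Differentiable ℂ F)
    (u : ℝ → ℝ → ℝ → ℂ)
    (hu : ∀ x y z : ℝ,
      u x y z = (k₂ * x + m₂ * y + g₂ * z) * F (k * x + m * y + g * z)
        + (1 / 2) * (k₁ * x + m₁ * y + g₁ * z) ^ 2 * deriv F (k * x + m * y + g * z)) :
    ∀ x y z : ℝ,
      iteratedDeriv 2 (fun s : ℝ => u s y z) x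
        + iteratedDeriv 2 (fun s : ℝ => u x s z) y
        + iteratedDeriv 2 (fun s : ℝ => u x y s) z = 0 := by
  intro x y z
  set ξ : ℂ := k * x + m * y + g * z with hξ
  have ex : (fun s : ℝ => u s y z)
      = fun s : ℝ => (k₂ * s + (m₂ * y + g₂ * z)) * F (k * s + (m * y + g * z))
        + (1 / 2) * (k₁ * s + (m₁ * y + g₁ * z)) ^ 2 * deriv F (k * s + (m * y + g * z)) := by
    funext s; rw [hu]; ring_nf
  have ey : (fun s : ℝ => u x s z)
      = fun s : ℝ => (m₂ * s + (k₂ * x + g₂ * z)) * F (m * s + (k * x + g * z))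
        + (1 / 2) * (m₁ * s + (k₁ * x + g₁ * z)) ^ 2 * deriv F (m * s + (k * x + g * z)) := by
    funext s; rw [hu]; ring_nf
  have ez : (fun s : ℝ => u x y s)
      = fun s : ℝ => (g₂ * s + (k₂ * x + m₂ * y)) * F (g * s + (k * x + m * y))
        + (1 / 2) * (g₁ * s + (k₁ * x + m₁ * y)) ^ 2 * deriv F (g * s + (k * x + m * y)) := by
    funext s; rw [hu]; ring_nf
  rw [ex, ey, ez,
    key F hF k₂ (m₂ * y + g₂ * z) k₁ (m₁ * y + g₁ * z) k (m * y + g * z) x ξ (by rw [hξ]; ring),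
    key F hF m₂ (k₂ * x + g₂ * z) m₁ (k₁ * x + g₁ * z) m (k * x + g * z) y ξ (by rw [hξ]; ring),
    key F hF g₂ (k₂ * x + m₂ * y) g₁ (k₁ * x + m₁ * y) g (k * x + m * y) z ξ (by rw [hξ]; ring)]
  linear_combination (deriv F ξ) * hchar2
    + (deriv (deriv F) ξ) * (((k₂ : ℂ) * x + m₂ * y + g₂ * z) * hchar
      + 2 * ((k₁ : ℂ) * x + m₁ * y + g₁ * z) * hchar1)
    + (deriv (deriv (deriv F)) ξ) * ((1 / 2) * ((k₁ : ℂ) * x + m₁ * y + g₁ * z) ^ 2 * hchar)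
end

section
/- Let a ∈ ℝ and m₀, m₁, m₂ ∈ ℂ. Then the function u : ℝ² → ℂ defined by u(x,y) = [ i·a·(m₁² + 2m₀m₂)·x + m₂·y + (1/2)·(2·i·a·m₀·m₁·x + m₁·y)² ] · exp(i·a·m₀²·x + m₀·y) satisfies the equation ∂²u/∂x² + a²·∂⁴u/∂y⁴ = 0 at every point of ℝ². The same holds with every occurrence of i replaced by −i. -/
open Complex

private lemma beam_step (α β γ δ μ : ℂ) :
    deriv (fun s : ℝ => (α * s ^ 2 + β * s + γ) * Complex.exp (δ * s + μ))
      = fun s : ℝ => ((δ * α) * s ^ 2 + (δ * β + 2 * α) * s + (δ * γ + β))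
          * Complex.exp (δ * s + μ) := by
  funext s
  have h : HasDerivAt (fun z : ℂ => (α * z ^ 2 + β * z + γ) * Complex.exp (δ * z + μ))
      ((2 * α * s + β) * Complex.exp (δ * s + μ)
        + (α * s ^ 2 + β * s + γ) * (Complex.exp (δ * s + μ) * δ)) (s : ℂ) := by
    have h1 : HasDerivAt (fun z : ℂ => α * z ^ 2 + β * z + γ) (2 * α * s + β) (s : ℂ) := by
      have := (((hasDerivAt_pow 2 (s : ℂ)).const_mul α).add
        ((hasDerivAt_id (s : ℂ)).const_mul β)).add_const γ
      simpa using this.congr_deriv (by push_cast; ring)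
    have h2 : HasDerivAt (fun z : ℂ => Complex.exp (δ * z + μ))
        (Complex.exp (δ * (s : ℂ) + μ) * δ) (s : ℂ) := by
      simpa using (((hasDerivAt_id (s : ℂ)).const_mul δ).add_const μ).cexp
    exact h1.mul h2
  rw [h.comp_ofReal.deriv]; ring

private lemma beam_it2 (α β γ δ μ : ℂ) :
    iteratedDeriv 2 (fun s : ℝ => (α * s ^ 2 + β * s + γ) * Complex.exp (δ * s + μ))
      = fun s : ℝ => ((δ ^ 2 * α) * s ^ 2 + (δ ^ 2 * β + 4 * δ * α) * s
          + (δ ^ 2 * γ + 2 * δ * β + 2 * α)) * Complex.exp (δ * s + μ) := by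
  rw [iteratedDeriv_succ, iteratedDeriv_one, beam_step, beam_step]
  funext s; ring_nf

private lemma beam_it4 (α β γ δ μ : ℂ) :
    iteratedDeriv 4 (fun s : ℝ => (α * s ^ 2 + β * s + γ) * Complex.exp (δ * s + μ))
      = fun s : ℝ => ((δ ^ 4 * α) * s ^ 2 + (δ ^ 4 * β + 8 * δ ^ 3 * α) * s
          + (δ ^ 4 * γ + 4 * δ ^ 3 * β + 12 * δ ^ 2 * α)) * Complex.exp (δ * s + μ) := by
  rw [iteratedDeriv_succ, iteratedDeriv_succ, iteratedDeriv_succ, iteratedDeriv_one,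
    beam_step, beam_step, beam_step, beam_step]
  funext s; ring_nf

/-- `u(x,y) = [±i·a·(m₁² + 2m₀m₂)·x + m₂·y + (1/2)(±2i·a·m₀·m₁·x + m₁·y)²] ·
exp(±i·a·m₀²·x + m₀·y)` satisfies the elastic beam equation `∂²u/∂x² + a²·∂⁴u/∂y⁴ = 0`. -/
theorem beam_solution_deg_two (a : ℝ) (m₀ m₁ m₂ : ℂ) (ε : ℂ) (hε : ε = I ∨ ε = -I)
    (u : ℝ → ℝ → ℂ)
    (hu : ∀ x y : ℝ,
      u x y = (ε * a * (m₁ ^ 2 + 2 * m₀ * m₂) * x + m₂ * y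
          + (1 / 2) * (2 * ε * a * m₀ * m₁ * x + m₁ * y) ^ 2)
        * Complex.exp (ε * a * m₀ ^ 2 * x + m₀ * y)) :
    ∀ x y : ℝ,
      iteratedDeriv 2 (fun s : ℝ => u s y) x
        + (a : ℂ) ^ 2 * iteratedDeriv 4 (fun s : ℝ => u x s) y = 0 := by
  have hε2 : ε ^ 2 = -1 := by
    rcases hε with h | h
    · rw [h]; exact Complex.I_sq
    · rw [h, neg_sq]; exact Complex.I_sq
  intro x y
  have hx : (fun s : ℝ => u s y)
      = fun s : ℝ => ((2 * ε ^ 2 * (a:ℂ) ^ 2 * m₀ ^ 2 * m₁ ^ 2) * s ^ 2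
          + (ε * a * (m₁ ^ 2 + 2 * m₀ * m₂) + 2 * ε * a * m₀ * m₁ ^ 2 * y) * s
          + (m₂ * y + m₁ ^ 2 * y ^ 2 / 2))
        * Complex.exp ((ε * a * m₀ ^ 2) * s + m₀ * y) := by
    funext s
    rw [hu]
    ring_nf
  have hy : (fun s : ℝ => u x s)
      = fun s : ℝ => ((m₁ ^ 2 / 2) * s ^ 2
          + (m₂ + 2 * ε * (a:ℂ) * m₀ * m₁ ^ 2 * x) * s
          + (ε * a * (m₁ ^ 2 + 2 * m₀ * m₂) * x + 2 * ε ^ 2 * a ^ 2 * m₀ ^ 2 * m₁ ^ 2 * x ^ 2))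
        * Complex.exp (m₀ * s + ε * a * m₀ ^ 2 * x) := by
    funext s
    rw [hu]
    ring_nf
  simp only [hx, hy, beam_it2, beam_it4]
  have hexp : Complex.exp (m₀ * (y:ℂ) + ε * a * m₀ ^ 2 * x)
      = Complex.exp (ε * a * m₀ ^ 2 * (x:ℂ) + m₀ * y) := by rw [add_comm]
  rw [add_comm (m₀ * (y:ℂ)) (ε * a * m₀ ^ 2 * x)] at hexp ⊢
  linear_combination (Complex.exp (ε * (a:ℂ) * m₀ ^ 2 * x + m₀ * y))
    * (6 * (a:ℂ) ^ 2 * m₀ ^ 2 * m₁ ^ 2 + 4 * a ^ 2 * m₀ ^ 3 * m₂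
      + 4 * a ^ 2 * m₀ ^ 3 * m₁ ^ 2 * y + a ^ 2 * m₀ ^ 4 * m₂ * y
      + (1 / 2) * a ^ 2 * m₀ ^ 4 * m₁ ^ 2 * y ^ 2
      + 9 * ε * a ^ 3 * m₀ ^ 4 * m₁ ^ 2 * x + 2 * ε * a ^ 3 * m₀ ^ 5 * m₂ * x
      + 2 * ε * a ^ 3 * m₀ ^ 5 * m₁ ^ 2 * x * y
      + 2 * ε ^ 2 * a ^ 4 * m₀ ^ 6 * m₁ ^ 2 * x ^ 2) * hε2
end

section
/- Let p ∈ ℝ and k₀, m₀, k₁, m₁ ∈ ℂ satisfy k₀⁴ + 2p·k₀²·m₀² + m₀⁴ = 0 and k₀³·k₁ + p·(k₀·k₁·m₀² + k₀²·m₀·m₁) + m₀³·m₁ = 0, and let F : ℂ → ℂ be complex-differentiable on all of ℂ. Then the function u : ℝ² → ℂ defined by u(x,y) = (k₁x + m₁y) · F(k₀x + m₀y) satisfies the generalized biharmonic equation ∂⁴u/∂x⁴ + 2p·∂⁴u/(∂x²∂y²) + ∂⁴u/∂y⁴ = 0 at every point of ℝ². -/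
private lemma entire_deriv {G : ℂ → ℂ} (hG : Differentiable ℂ G) :
    Differentiable ℂ (deriv G) :=
  Complex.analyticOnNhd_univ_iff_differentiable.mp
    ((Complex.analyticOnNhd_univ_iff_differentiable.mpr hG).deriv)

private lemma entire_iter {G : ℂ → ℂ} (hG : Differentiable ℂ G) (n : ℕ) :
    Differentiable ℂ (deriv^[n] G) := by
  induction n with
  | zero => exact hG
  | succ m ih => rw [Function.iterate_succ_apply']; exact entire_deriv ih

private lemma B1 {G : ℂ → ℂ} (hG : Differentiable ℂ G) (c d : ℂ) (x : ℝ) :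
    HasDerivAt (fun s : ℝ => G (c * s + d)) (c * deriv G (c * x + d)) x := by
  have h1 : HasDerivAt (fun z : ℂ => c * z + d) c (x : ℂ) := by
    simpa using ((hasDerivAt_id (x : ℂ)).const_mul c).add_const d
  have h2 : HasDerivAt (fun z : ℂ => G (c * z + d)) (deriv G (c * x + d) * c) x :=
    ((hG (c * x + d)).hasDerivAt).comp (x:ℂ) h1
  have := h2.comp_ofReal
  simpa [mul_comm] using this

private lemma B2 {G : ℂ → ℂ} (hG : Differentiable ℂ G) (a b c d : ℂ) (x : ℝ) :
    HasDerivAt (fun s : ℝ => (a * s + b) * G (c * s + d))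
      (a * G (c * x + d) + (a * x + b) * (c * deriv G (c * x + d))) x := by
  have h1 : HasDerivAt (fun z : ℂ => a * z + b) a (x : ℂ) := by
    simpa using ((hasDerivAt_id (x : ℂ)).const_mul a).add_const b
  have hc : HasDerivAt (fun z : ℂ => c * z + d) c (x : ℂ) := by
    simpa using ((hasDerivAt_id (x : ℂ)).const_mul c).add_const d
  have h2 : HasDerivAt (fun z : ℂ => G (c * z + d)) (deriv G (c * x + d) * c) (x : ℂ) :=
    ((hG (c * x + d)).hasDerivAt).comp (x:ℂ) hc
  have h3 := (h1.mul h2).comp_ofReal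
  simpa [mul_comm, mul_assoc, mul_left_comm] using h3

/-- Key formula for iterated derivatives. -/
private lemma key_s14 {G H : ℂ → ℂ} (hG : Differentiable ℂ G) (hH : Differentiable ℂ H)
    (a b c d e : ℂ) (n : ℕ) (x : ℝ) :
    iteratedDeriv n (fun s : ℝ => (a * s + b) * G (c * s + d) + e * H (c * s + d)) x
      = c ^ n * ((a * x + b) * (deriv^[n] G) (c * x + d))
        + (n : ℂ) * a * c ^ (n - 1) * (deriv^[n - 1] G) (c * x + d)
        + e * c ^ n * (deriv^[n] H) (c * x + d) := by
  induction n generalizing x with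
  | zero => simp [iteratedDeriv_zero]
  | succ m ih =>
    rw [iteratedDeriv_succ]
    have hfun : iteratedDeriv m (fun s : ℝ => (a * s + b) * G (c * s + d) + e * H (c * s + d))
        = fun x : ℝ => c ^ m * ((a * x + b) * (deriv^[m] G) (c * x + d))
          + (m : ℂ) * a * c ^ (m - 1) * (deriv^[m - 1] G) (c * x + d)
          + e * c ^ m * (deriv^[m] H) (c * x + d) := funext fun x => ih x
    rw [hfun]
    have hGm := entire_iter hG m
    have hGm1 := entire_iter hG (m - 1)
    have hHm := entire_iter hH m
    have hd : HasDerivAt (fun x : ℝ => c ^ m * ((a * x + b) * (deriv^[m] G) (c * x + d))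
          + (m : ℂ) * a * c ^ (m - 1) * (deriv^[m - 1] G) (c * x + d)
          + e * c ^ m * (deriv^[m] H) (c * x + d))
        (c ^ m * (a * (deriv^[m] G) (c * x + d)
            + (a * x + b) * (c * deriv (deriv^[m] G) (c * x + d)))
          + (m : ℂ) * a * c ^ (m - 1) * (c * deriv (deriv^[m - 1] G) (c * x + d))
          + e * c ^ m * (c * deriv (deriv^[m] H) (c * x + d))) x := by
      exact (((B2 hGm a b c d x).const_mul (c ^ m)).add
        ((B1 hGm1 c d x).const_mul ((m : ℂ) * a * c ^ (m - 1)))).add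
        ((B1 hHm c d x).const_mul (e * c ^ m))
    rw [hd.deriv]
    have h1 : deriv (deriv^[m] G) = deriv^[m + 1] G := (Function.iterate_succ_apply' deriv m G).symm ▸ rfl
    cases m with
    | zero => simp [Function.iterate_succ_apply']; ring
    | succ k =>
      have h2 : deriv (deriv^[k + 1 - 1] G) (c * x + d) = deriv^[k + 1] G (c * x + d) := by
        simp [Function.iterate_succ_apply']
      have h3 : deriv (deriv^[k + 1] G) (c * x + d) = deriv^[k + 2] G (c * x + d) := by
        rw [← Function.iterate_succ_apply' deriv (k + 1)]
      have h4 : deriv (deriv^[k + 1] H) (c * x + d) = deriv^[k + 2] H (c * x + d) := by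
        rw [← Function.iterate_succ_apply' deriv (k + 1)]
      rw [h2, h3, h4]
      push_cast
      ring

/-- If `k₀⁴ + 2p·k₀²·m₀² + m₀⁴ = 0`, `k₀³·k₁ + p·(k₀·k₁·m₀² + k₀²·m₀·m₁) + m₀³·m₁ = 0`, and
`F` is entire, then `u(x,y) = (k₁x + m₁y)·F(k₀x + m₀y)` satisfies the generalized biharmonic
equation `∂⁴u/∂x⁴ + 2p·∂⁴u/(∂x²∂y²) + ∂⁴u/∂y⁴ = 0`. -/
theorem biharmonic_solution_deg_one (p : ℝ) (k₀ m₀ k₁ m₁ : ℂ)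
    (hchar : k₀ ^ 4 + 2 * p * k₀ ^ 2 * m₀ ^ 2 + m₀ ^ 4 = 0)
    (hchar1 : k₀ ^ 3 * k₁ + p * (k₀ * k₁ * m₀ ^ 2 + k₀ ^ 2 * m₀ * m₁) + m₀ ^ 3 * m₁ = 0)
    (F : ℂ → ℂ) (hF : Differentiable ℂ F)
    (u : ℝ → ℝ → ℂ)
    (hu : ∀ x y : ℝ, u x y = (k₁ * x + m₁ * y) * F (k₀ * x + m₀ * y)) :
    ∀ x y : ℝ,
      iteratedDeriv 4 (fun s : ℝ => u s y) x
        + 2 * (p : ℂ) *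
            iteratedDeriv 2 (fun s : ℝ => iteratedDeriv 2 (fun t : ℝ => u s t) y) x
        + iteratedDeriv 4 (fun t : ℝ => u x t) y = 0 := by
  intro x y
  set w : ℂ := k₀ * x + m₀ * y with hw
  -- x-direction fourth derivative
  have e1 : iteratedDeriv 4 (fun s : ℝ => u s y) x
      = k₀ ^ 4 * ((k₁ * x + m₁ * y) * (deriv^[4] F) w)
        + 4 * k₁ * k₀ ^ 3 * (deriv^[3] F) w := by
    have hfun : (fun s : ℝ => u s y)
        = fun s : ℝ => (k₁ * s + m₁ * y) * F (k₀ * s + m₀ * y) + 0 * F (k₀ * s + m₀ * y) := by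
      funext s; rw [hu]; ring
    rw [hfun, key_s14 hF hF]
    push_cast; ring
  -- y-direction fourth derivative
  have e3 : iteratedDeriv 4 (fun t : ℝ => u x t) y
      = m₀ ^ 4 * ((k₁ * x + m₁ * y) * (deriv^[4] F) w)
        + 4 * m₁ * m₀ ^ 3 * (deriv^[3] F) w := by
    have hfun : (fun t : ℝ => u x t)
        = fun t : ℝ => (m₁ * t + k₁ * x) * F (m₀ * t + k₀ * x) + 0 * F (m₀ * t + k₀ * x) := by
      funext t; rw [hu]; ring_nf
    rw [hfun, key_s14 hF hF]
    have : m₀ * y + k₀ * x = w := by rw [hw]; ring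
    rw [this]; push_cast; ring
  -- mixed term
  have e2 : iteratedDeriv 2 (fun s : ℝ => iteratedDeriv 2 (fun t : ℝ => u s t) y) x
      = k₀ ^ 2 * m₀ ^ 2 * ((k₁ * x + m₁ * y) * (deriv^[4] F) w)
        + (2 * m₀ ^ 2 * k₁ * k₀ + 2 * m₁ * m₀ * k₀ ^ 2) * (deriv^[3] F) w := by
    have hinner : (fun s : ℝ => iteratedDeriv 2 (fun t : ℝ => u s t) y)
        = fun s : ℝ => (m₀ ^ 2 * k₁ * s + m₀ ^ 2 * m₁ * y) * (deriv^[2] F) (k₀ * s + m₀ * y)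
            + (2 * m₁ * m₀) * (deriv^[1] F) (k₀ * s + m₀ * y) := by
      funext s
      have hfun : (fun t : ℝ => u s t)
          = fun t : ℝ => (m₁ * t + k₁ * s) * F (m₀ * t + k₀ * s) + 0 * F (m₀ * t + k₀ * s) := by
        funext t; rw [hu]; ring_nf
      rw [hfun, key_s14 hF hF]
      have : m₀ * y + k₀ * s = k₀ * s + m₀ * y := by ring
      rw [this]; push_cast; ring
    rw [hinner, key_s14 (entire_iter hF 2) (entire_iter hF 1)]
    have h22 : deriv^[2] (deriv^[2] F) = deriv^[4] F := by
      rw [← Function.iterate_add_apply]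
    have h21 : deriv^[1] (deriv^[2] F) = deriv^[3] F := by
      rw [← Function.iterate_add_apply]
    have h12 : deriv^[2] (deriv^[1] F) = deriv^[3] F := by
      rw [← Function.iterate_add_apply]
    rw [h22, h21, h12]
    push_cast; ring
  rw [e1, e2, e3]
  linear_combination ((k₁ * x + m₁ * y) * (deriv^[4] F) w) * hchar
    + (4 * (deriv^[3] F) w) * hchar1
end

section
/- Let λ ∈ ℂ and k₀, m₀, k₁, m₁, k₂, m₂ ∈ ℂ satisfy k₀² + m₀² + λ = 0, k₀·k₁ + m₀·m₁ = 0, and k₁² + m₁² + 2(k₀·k₂ + m₀·m₂) = 0. Then the function u : ℝ² → ℂ defined by u(x,y) = [ (k₂x + m₂y) + (1/2)(k₁x + m₁y)² ] · exp(k₀x + m₀y) satisfies the two-dimensional Helmholtz equation ∂²u/∂x² + ∂²u/∂y² + λ·u = 0 at every point of ℝ². -/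
lemma helmholtz_key (a b c d e : ℂ) (s : ℝ) :
    HasDerivAt (fun t : ℝ => (a + b * t + c * t ^ 2) * Complex.exp (d * t + e))
      ((b + 2 * c * s + d * (a + b * s + c * s ^ 2)) * Complex.exp (d * s + e)) s := by
  have h1 : HasDerivAt (fun z : ℂ => a + b * z + c * z ^ 2) (b + 2 * c * s) (s : ℂ) := by
    have := ((hasDerivAt_const (s : ℂ) a).add ((hasDerivAt_id (s : ℂ)).const_mul b)).add
      ((hasDerivAt_pow 2 (s : ℂ)).const_mul c)
    refine this.congr_deriv ?_
    ring
  have h2 : HasDerivAt (fun z : ℂ => Complex.exp (d * z + e))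
      (Complex.exp (d * (s : ℂ) + e) * d) (s : ℂ) := by
    have h3 : HasDerivAt (fun z : ℂ => d * z + e) d (s : ℂ) := by
      simpa using ((hasDerivAt_id (s : ℂ)).const_mul d).add_const e
    simpa [mul_comm] using h3.cexp
  have h := h1.mul h2
  have h' : HasDerivAt (fun z : ℂ => (a + b * z + c * z ^ 2) * Complex.exp (d * z + e))
      ((b + 2 * c * s + d * (a + b * s + c * s ^ 2)) * Complex.exp (d * s + e)) (s : ℂ) := by
    refine h.congr_deriv ?_
    ring
  exact h'.comp_ofReal

lemma helmholtz_deriv2 (a b c d e : ℂ) (s : ℝ) :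
    iteratedDeriv 2 (fun t : ℝ => (a + b * t + c * t ^ 2) * Complex.exp (d * t + e)) s
    = ((2 * c + d * b) + 2 * (d * c) * s
        + d * ((b + d * a) + (2 * c + d * b) * s + (d * c) * s ^ 2))
        * Complex.exp (d * s + e) := by
  rw [iteratedDeriv_succ, iteratedDeriv_one]
  have h : deriv (fun t : ℝ => (a + b * t + c * t ^ 2) * Complex.exp (d * t + e))
      = fun t : ℝ => ((b + d * a) + (2 * c + d * b) * t + (d * c) * t ^ 2)
          * Complex.exp (d * t + e) := by
    funext t
    rw [(helmholtz_key a b c d e t).deriv]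
    ring
  rw [h]
  exact (helmholtz_key (b + d * a) (2 * c + d * b) (d * c) d e s).deriv

/-- If `k₀² + m₀² + λ = 0`, `k₀·k₁ + m₀·m₁ = 0` and `k₁² + m₁² + 2(k₀·k₂ + m₀·m₂) = 0`, then
`u(x,y) = [(k₂x + m₂y) + (1/2)(k₁x + m₁y)²]·exp(k₀x + m₀y)` satisfies the two-dimensional
Helmholtz equation `∂²u/∂x² + ∂²u/∂y² + λ·u = 0`. -/
theorem helmholtz_solution_deg_two (lam k₀ m₀ k₁ m₁ k₂ m₂ : ℂ)
    (hchar : k₀ ^ 2 + m₀ ^ 2 + lam = 0)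
    (hchar1 : k₀ * k₁ + m₀ * m₁ = 0)
    (hchar2 : k₁ ^ 2 + m₁ ^ 2 + 2 * (k₀ * k₂ + m₀ * m₂) = 0)
    (u : ℝ → ℝ → ℂ)
    (hu : ∀ x y : ℝ,
      u x y = ((k₂ * x + m₂ * y) + (1 / 2) * (k₁ * x + m₁ * y) ^ 2)
        * Complex.exp (k₀ * x + m₀ * y)) :
    ∀ x y : ℝ,
      iteratedDeriv 2 (fun s : ℝ => u s y) x
        + iteratedDeriv 2 (fun t : ℝ => u x t) y
        + lam * u x y = 0 := by
  intro x y
  have hx : (fun s : ℝ => u s y)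
      = fun s : ℝ => ((m₂ * y + (1/2) * m₁ ^ 2 * y ^ 2) + (k₂ + k₁ * m₁ * y) * s
          + ((1/2) * k₁ ^ 2) * s ^ 2) * Complex.exp (k₀ * s + m₀ * y) := by
    funext s
    rw [hu s y]
    ring_nf
  have hy : (fun t : ℝ => u x t)
      = fun t : ℝ => ((k₂ * x + (1/2) * k₁ ^ 2 * x ^ 2) + (m₂ + k₁ * m₁ * x) * t
          + ((1/2) * m₁ ^ 2) * t ^ 2) * Complex.exp (m₀ * t + k₀ * x) := by
    funext t
    rw [hu x t]
    ring_nf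
  rw [hx, hy, helmholtz_deriv2, helmholtz_deriv2, hu x y]
  have hexp : Complex.exp (m₀ * y + k₀ * x) = Complex.exp (k₀ * x + m₀ * y) := by
    ring_nf
  rw [hexp]
  linear_combination (Complex.exp (k₀ * x + m₀ * y)) *
    (hchar2 + 2 * (k₁ * x + m₁ * y) * hchar1
      + ((k₂ * x + m₂ * y) + (1/2) * (k₁ * x + m₁ * y) ^ 2) * hchar)
end

section
/- Let α, β ∈ ℝ with α > 0 and β > 0, and let k₀, m₀, k₁, m₁ ∈ ℂ satisfy k₀³ + α·k₀² − β·m₀² = 0 and 3·k₀²·k₁ + 2α·k₀·k₁ − 2β·m₀·m₁ = 0. Then the function V : ℝ² → ℂ defined by V(t,x) = (k₁·t + m₁·x) · exp(k₀·t + m₀·x) satisfies the third-order hydrodynamics equation ∂³V/∂t³ + α·∂²V/∂t² − β·∂²V/∂x² = 0 at every point of ℝ². -/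
private lemma hd_hasDerivAt (a b c d : ℂ) (t : ℝ) :
    HasDerivAt (fun s : ℝ => (a * s + b) * Complex.exp (c * s + d))
      ((c * a * t + (a + c * b)) * Complex.exp (c * t + d)) t := by
  have h0 : HasDerivAt (fun s : ℝ => (s : ℂ)) 1 t := by
    simpa using (hasDerivAt_id t).ofReal_comp
  have h1 : HasDerivAt (fun s : ℝ => a * (s : ℂ) + b) a t := by
    simpa using (h0.const_mul a).add_const b
  have h2 : HasDerivAt (fun s : ℝ => Complex.exp (c * (s : ℂ) + d))
      (Complex.exp (c * t + d) * c) t := by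
    simpa using ((h0.const_mul c).add_const d).cexp
  have : HasDerivAt (fun s : ℝ => (a * s + b) * Complex.exp (c * s + d)) _ t := h1.mul h2
  convert this using 1
  ring

private lemma hd_deriv (a b c d : ℂ) :
    deriv (fun s : ℝ => (a * s + b) * Complex.exp (c * s + d))
      = fun s : ℝ => ((c * a) * s + (a + c * b)) * Complex.exp (c * s + d) := by
  funext t
  exact (hd_hasDerivAt a b c d t).deriv

/-- If `k₀³ + α·k₀² − β·m₀² = 0` and `3k₀²·k₁ + 2α·k₀·k₁ − 2β·m₀·m₁ = 0` with `α, β > 0`, then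
`V(t,x) = (k₁t + m₁x)·exp(k₀t + m₀x)` satisfies the third-order hydrodynamics equation
`∂³V/∂t³ + α·∂²V/∂t² − β·∂²V/∂x² = 0`. -/
theorem hydrodynamics_solution_deg_one (α β : ℝ) (hα : 0 < α) (hβ : 0 < β) (k₀ m₀ k₁ m₁ : ℂ)
    (hchar : k₀ ^ 3 + α * k₀ ^ 2 - β * m₀ ^ 2 = 0)
    (hchar1 : 3 * k₀ ^ 2 * k₁ + 2 * α * k₀ * k₁ - 2 * β * m₀ * m₁ = 0)
    (V : ℝ → ℝ → ℂ)
    (hV : ∀ t x : ℝ, V t x = (k₁ * t + m₁ * x) * Complex.exp (k₀ * t + m₀ * x)) :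
    ∀ t x : ℝ,
      iteratedDeriv 3 (fun s : ℝ => V s x) t
        + (α : ℂ) * iteratedDeriv 2 (fun s : ℝ => V s x) t
        - (β : ℂ) * iteratedDeriv 2 (fun s : ℝ => V t s) x = 0 := by
  intro t x
  have hft : (fun s : ℝ => V s x)
      = fun s : ℝ => (k₁ * s + m₁ * x) * Complex.exp (k₀ * s + m₀ * x) := by
    funext s; rw [hV]
  have hfx : (fun s : ℝ => V t s)
      = fun s : ℝ => (m₁ * s + k₁ * t) * Complex.exp (m₀ * s + k₀ * t) := by
    funext s; rw [hV]; ring_nf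
  rw [hft, hfx]
  rw [show (3:ℕ) = 2 + 1 from rfl, iteratedDeriv_succ, iteratedDeriv_succ, iteratedDeriv_succ,
    iteratedDeriv_succ, iteratedDeriv_succ, iteratedDeriv_zero, iteratedDeriv_zero]
  simp only [hd_deriv]
  have hxt : m₀ * (x:ℂ) + k₀ * t = k₀ * t + m₀ * x := by ring
  simp only [hxt]
  linear_combination (Complex.exp (k₀ * t + m₀ * x)) * ((k₁ * t + m₁ * x) * hchar + hchar1)
end
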